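/- Let q > 0. For every nonnegative integer k, the probability that a random permutation of {1,…,n} distributed according to the fixed point biased measure P_n^q has exactly k fixed points converges, as n → ∞, to e^{-q} q^k / k!. In other words, the number of fixed points under P_n^q converges in distribution to a Poisson(q) random variable. -/

import Mathlib

open Finset Filter

/-- The number of fixed points of a permutation of `{1,…,n}`. -/
def fp {n : ℕ} (σ : Equiv.Perm (Fin n)) : ℕ :=
  (Finset.univ.filter fun i => σ i = i).card

lemma card_fix_superset {n : ℕ} (S : Finset (Fin n)) :
    (Finset.univ.filter fun σ : Equiv.Perm (Fin n) => ∀ a ∈ S, σ a = a).card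
      = (n - S.card).factorial := by
  classical
  rw [← Fintype.card_subtype]
  have e1 : {σ : Equiv.Perm (Fin n) // ∀ a ∈ S, σ a = a}
      ≃ {f : Equiv.Perm (Fin n) // ∀ a, ¬(a ∉ S) → f a = a} :=
    Equiv.subtypeEquivRight (by intro f; simp)
  rw [Fintype.card_congr (e1.trans (Equiv.Perm.subtypeEquivSubtypePerm
    (fun a : Fin n => a ∉ S)).symm), Fintype.card_perm, Fintype.card_subtype_compl,
    Fintype.card_coe, Fintype.card_fin]

lemma card_fix_eq {n : ℕ} (S : Finset (Fin n)) :
    (Finset.univ.filter fun σ : Equiv.Perm (Fin n) =>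
        (Finset.univ.filter fun i => σ i = i) = S).card
      = numDerangements (n - S.card) := by
  classical
  rw [← Fintype.card_subtype]
  have e1 : {σ : Equiv.Perm (Fin n) // (Finset.univ.filter fun i => σ i = i) = S}
      ≃ {f : Equiv.Perm (Fin n) // ∀ a, ¬(a ∉ S) ↔ a ∈ Function.fixedPoints f} := by
    apply Equiv.subtypeEquivRight
    intro f
    simp only [Finset.ext_iff, Finset.mem_filter, Finset.mem_univ, true_and, not_not,
      Function.mem_fixedPoints, Function.IsFixedPt]
    exact ⟨fun h a => (h a).symm, fun h a => (h a).symm⟩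
  rw [Fintype.card_congr (e1.trans (derangements.subtypeEquiv (fun a : Fin n => a ∉ S)).symm),
    card_derangements_eq_numDerangements, Fintype.card_subtype_compl,
    Fintype.card_coe, Fintype.card_fin]

lemma card_fp_eq (n k : ℕ) :
    (Finset.univ.filter fun σ : Equiv.Perm (Fin n) => fp σ = k).card
      = n.choose k * numDerangements (n - k) := by
  classical
  rw [Finset.card_eq_sum_card_fiberwise
    (f := fun σ : Equiv.Perm (Fin n) => Finset.univ.filter fun i => σ i = i)
    (t := Finset.powersetCard k Finset.univ)
    (by intro σ hσ
        rw [Finset.mem_coe, Finset.mem_filter] at hσ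
        rw [Finset.mem_coe, Finset.mem_powersetCard_univ]
        exact hσ.2)]
  have : ∀ S ∈ Finset.powersetCard k (Finset.univ : Finset (Fin n)),
      ((Finset.univ.filter fun σ : Equiv.Perm (Fin n) => fp σ = k).filter
        (fun σ => (Finset.univ.filter fun i => σ i = i) = S)).card
      = numDerangements (n - k) := by
    intro S hS
    rw [Finset.mem_powersetCard_univ] at hS
    rw [Finset.filter_filter]
    have : ∀ σ : Equiv.Perm (Fin n),
        (fp σ = k ∧ (Finset.univ.filter fun i => σ i = i) = S) ↔
        ((Finset.univ.filter fun i => σ i = i) = S) := by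
      intro σ
      constructor
      · exact fun h => h.2
      · intro h; exact ⟨by rw [fp, h, hS], h⟩
    rw [Finset.filter_congr (fun σ _ => this σ), card_fix_eq, hS]
  rw [Finset.sum_congr rfl this, Finset.sum_const, Finset.card_powersetCard,
    Finset.card_univ, Fintype.card_fin, smul_eq_mul]

lemma den_eq (q : ℝ) (n : ℕ) :
    (∑ σ : Equiv.Perm (Fin n), q ^ fp σ)
      = ∑ m ∈ Finset.range (n + 1),
          (n.choose m : ℝ) * (n - m).factorial * (q - 1) ^ m := by
  classical
  have hpow : ∀ σ : Equiv.Perm (Fin n), q ^ fp σ =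
      ∑ T ∈ (Finset.univ.filter fun i => σ i = i).powerset, (q - 1) ^ T.card := by
    intro σ
    rw [Finset.sum_powerset_apply_card]
    have := add_pow (q - 1) 1 ((Finset.univ.filter fun i => σ i = i).card)
    simp only [sub_add_cancel, one_pow, mul_one, nsmul_eq_mul] at this ⊢
    rw [fp, this]
    exact Finset.sum_congr rfl fun m _ => by ring
  simp_rw [hpow]
  have hps : ∀ σ : Equiv.Perm (Fin n),
      (Finset.univ.filter fun i => σ i = i).powerset
        = (Finset.univ : Finset (Fin n)).powerset.filter
            (fun T => T ⊆ Finset.univ.filter fun i => σ i = i) := by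
    intro σ
    ext T
    simp [Finset.mem_powerset]
  calc (∑ σ : Equiv.Perm (Fin n),
          ∑ T ∈ (Finset.univ.filter fun i => σ i = i).powerset, (q - 1) ^ T.card)
      = ∑ σ : Equiv.Perm (Fin n), ∑ T ∈ (Finset.univ : Finset (Fin n)).powerset,
          if T ⊆ Finset.univ.filter (fun i => σ i = i) then (q - 1) ^ T.card else 0 := by
        refine Finset.sum_congr rfl fun σ _ => ?_
        rw [hps σ, Finset.sum_filter]
    _ = ∑ T ∈ (Finset.univ : Finset (Fin n)).powerset, ∑ σ : Equiv.Perm (Fin n),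
          if T ⊆ Finset.univ.filter (fun i => σ i = i) then (q - 1) ^ T.card else 0 :=
        Finset.sum_comm
    _ = ∑ T ∈ (Finset.univ : Finset (Fin n)).powerset,
          ((n - T.card).factorial : ℝ) * (q - 1) ^ T.card := by
        refine Finset.sum_congr rfl fun T _ => ?_
        rw [← Finset.sum_filter, Finset.sum_const, nsmul_eq_mul]
        congr 1
        have : (Finset.univ.filter fun σ : Equiv.Perm (Fin n) =>
            T ⊆ Finset.univ.filter fun i => σ i = i)
            = Finset.univ.filter fun σ : Equiv.Perm (Fin n) => ∀ a ∈ T, σ a = a := by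
          refine Finset.filter_congr fun σ _ => ?_
          simp [Finset.subset_iff]
        rw [this, card_fix_superset]
    _ = ∑ m ∈ Finset.range (n + 1),
          (n.choose m : ℝ) * (n - m).factorial * (q - 1) ^ m := by
        rw [Finset.sum_powerset_apply_card (fun m => ((n - m).factorial : ℝ) * (q - 1) ^ m)]
        simp only [Finset.card_univ, Fintype.card_fin, nsmul_eq_mul]
        exact Finset.sum_congr rfl fun m _ => by ring

open NormedSpace in
lemma exp_partial (x : ℝ) :
    Tendsto (fun n : ℕ => ∑ m ∈ Finset.range (n + 1), x ^ m / m.factorial)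
      atTop (nhds (Real.exp x)) := by
  rw [tendsto_add_atTop_iff_nat
    (f := fun n => ∑ m ∈ Finset.range n, x ^ m / m.factorial) 1]
  apply HasSum.tendsto_sum_nat
  rw [Real.exp_eq_exp_ℝ]
  exact expSeries_div_hasSum_exp x

lemma derang_shift (k : ℕ) :
    Tendsto (fun n : ℕ => ((numDerangements (n - k) : ℝ) / (n - k).factorial))
      atTop (nhds (Real.exp (-1))) :=
  numDerangements_tendsto_inv_e.comp (tendsto_sub_atTop_nat k)

/-- Fixed points of a random permutation under the fixed point biased measure `P_n^q`
converge in distribution to a Poisson(q) random variable: for each `k`, the probability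
of exactly `k` fixed points tends to `e^{-q} q^k / k!`. -/
theorem fp_biased_tendsto_poisson (q : ℝ) (hq : 0 < q) (k : ℕ) :
    Tendsto (fun n : ℕ =>
        (∑ σ ∈ Finset.univ.filter fun σ : Equiv.Perm (Fin n) => fp σ = k, q ^ fp σ) /
          ∑ σ : Equiv.Perm (Fin n), q ^ fp σ)
      atTop (nhds (Real.exp (-q) * q ^ k / Nat.factorial k)) := by
  classical
  set A : ℕ → ℝ := fun n =>
    (∑ σ ∈ Finset.univ.filter fun σ : Equiv.Perm (Fin n) => fp σ = k, q ^ fp σ) /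
      n.factorial with hAdef
  set B : ℕ → ℝ := fun n => (∑ σ : Equiv.Perm (Fin n), q ^ fp σ) / n.factorial with hBdef
  have hnum : ∀ n : ℕ,
      (∑ σ ∈ Finset.univ.filter fun σ : Equiv.Perm (Fin n) => fp σ = k, q ^ fp σ)
        = q ^ k * ((n.choose k : ℝ) * (numDerangements (n - k) : ℝ)) := by
    intro n
    have h1 : ∀ σ ∈ (Finset.univ.filter fun σ : Equiv.Perm (Fin n) => fp σ = k),
        q ^ fp σ = q ^ k := by
      intro σ hσ; rw [Finset.mem_filter] at hσ; rw [hσ.2]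
    rw [Finset.sum_congr rfl h1, Finset.sum_const, nsmul_eq_mul, card_fp_eq]
    push_cast
    ring
  have hA : Tendsto A atTop (nhds (q ^ k / k.factorial * Real.exp (-1))) := by
    have h2 : Tendsto (fun n : ℕ => q ^ k / k.factorial *
        ((numDerangements (n - k) : ℝ) / (n - k).factorial)) atTop
        (nhds (q ^ k / k.factorial * Real.exp (-1))) :=
      (derang_shift k).const_mul _
    refine h2.congr' ?_
    filter_upwards [eventually_ge_atTop k] with n hn
    have hchoose : (n.choose k : ℝ) * k.factorial * (n - k).factorial = n.factorial := by
      exact_mod_cast congrArg (Nat.cast : ℕ → ℝ)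
        (Nat.choose_mul_factorial_mul_factorial hn)
    have hkf : (k.factorial : ℝ) ≠ 0 := Nat.cast_ne_zero.2 k.factorial_ne_zero
    have hnkf : ((n - k).factorial : ℝ) ≠ 0 := Nat.cast_ne_zero.2 (n - k).factorial_ne_zero
    have hnf : (n.factorial : ℝ) ≠ 0 := Nat.cast_ne_zero.2 n.factorial_ne_zero
    show q ^ k / k.factorial * _ = A n
    rw [hAdef]
    simp only [hnum n]
    field_simp
    rw [← hchoose]
    ring
  have hBeq : ∀ n : ℕ, B n = ∑ m ∈ Finset.range (n + 1), (q - 1) ^ m / m.factorial := by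
    intro n
    rw [hBdef]
    simp only [den_eq q n, Finset.sum_div]
    refine Finset.sum_congr rfl fun m hm => ?_
    have hm' : m ≤ n := Finset.mem_range_succ_iff.mp hm
    have hchoose : (n.choose m : ℝ) * m.factorial * (n - m).factorial = n.factorial := by
      exact_mod_cast congrArg (Nat.cast : ℕ → ℝ)
        (Nat.choose_mul_factorial_mul_factorial hm')
    have hmf : (m.factorial : ℝ) ≠ 0 := Nat.cast_ne_zero.2 m.factorial_ne_zero
    have hnf : (n.factorial : ℝ) ≠ 0 := Nat.cast_ne_zero.2 n.factorial_ne_zero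
    field_simp
    rw [← hchoose]
    ring
  have hB : Tendsto B atTop (nhds (Real.exp (q - 1))) :=
    (exp_partial (q - 1)).congr fun n => (hBeq n).symm
  have hlim := hA.div hB (Real.exp_ne_zero (q - 1))
  have hval : q ^ k / k.factorial * Real.exp (-1) / Real.exp (q - 1)
      = Real.exp (-q) * q ^ k / k.factorial := by
    have h3 : Real.exp (-1) / Real.exp (q - 1) = Real.exp (-q) := by
      rw [← Real.exp_sub]
      ring_nf
    rw [mul_div_assoc, h3]
    ring
  rw [hval] at hlim
  refine hlim.congr fun n => ?_
  show A n / B n = _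
  rw [hAdef, hBdef]
  have hnf : (n.factorial : ℝ) ≠ 0 := Nat.cast_ne_zero.2 n.factorial_ne_zero
  rw [div_div_div_comm, div_self hnf, div_one]
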